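/- Fix λ > 0 and for ε ∈ (0,1) small let x(ε) be the unique solution of g_λ(x) = ε on (0,∞). Then as ε → 0⁺, x(ε) ∼ L / W(L/(eλ)), where L = log(1/ε) and W is the principal branch of the Lambert W function; i.e., the ratio of the two sides tends to 1. -/

import Mathlib

open Real Filter

/-- Upper incomplete gamma function `Γ(a, x) = ∫_x^∞ t^(a-1) e^(-t) dt`. -/
noncomputable def upperGamma (a x : ℝ) : ℝ := ∫ t in Set.Ioi x, t ^ (a - 1) * Real.exp (-t)

/-- `g_λ(x) = 1 − Γ(x+1, λ)/Γ(x+1)`. -/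
noncomputable def gFun (lam x : ℝ) : ℝ := 1 - upperGamma (x + 1) lam / Real.Gamma (x + 1)

open MeasureTheory Set in
private lemma integrandInt {a : ℝ} (ha : 0 < a) :
    IntegrableOn (fun t : ℝ => t ^ (a - 1) * Real.exp (-t)) (Set.Ioi 0) :=
  (Real.GammaIntegral_convergent ha).congr_fun (fun x _ => mul_comm _ _) measurableSet_Ioi

open MeasureTheory Set in
private lemma gamma_eq {a : ℝ} (ha : 0 < a) :
    Real.Gamma a = ∫ t in Set.Ioi (0:ℝ), t ^ (a - 1) * Real.exp (-t) := by
  rw [Real.Gamma_eq_integral ha]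
  exact MeasureTheory.setIntegral_congr_fun measurableSet_Ioi fun x _ => mul_comm _ _

open MeasureTheory Set in
private lemma gamma_split (a lam : ℝ) (ha : 0 < a) (hlam : 0 < lam) :
    Real.Gamma a = (∫ t in Set.Ioc 0 lam, t ^ (a - 1) * Real.exp (-t)) + upperGamma a lam := by
  rw [gamma_eq ha, upperGamma, ← Set.Ioc_union_Ioi_eq_Ioi hlam.le,
    MeasureTheory.setIntegral_union (Set.Ioc_disjoint_Ioi le_rfl) measurableSet_Ioi
      ((integrandInt ha).mono_set Set.Ioc_subset_Ioi_self)
      ((integrandInt ha).mono_set (Set.Ioi_subset_Ioi hlam.le))]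

open MeasureTheory Set in
private lemma gFun_eq (lam x : ℝ) (hlam : 0 < lam) (hx : 0 < x) :
    gFun lam x = (∫ t in Set.Ioc 0 lam, t ^ x * Real.exp (-t)) / Real.Gamma (x + 1) := by
  have hΓ : 0 < Real.Gamma (x + 1) := Real.Gamma_pos_of_pos (by linarith)
  have h := gamma_split (x + 1) lam (by linarith) hlam
  simp only [add_sub_cancel_right] at h
  rw [gFun]
  have hu : upperGamma (x + 1) lam
      = Real.Gamma (x + 1) - ∫ t in Set.Ioc 0 lam, t ^ x * Real.exp (-t) := by linarith
  rw [hu]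
  field_simp
  ring

open MeasureTheory Set in
private lemma I_bounds (lam x : ℝ) (hlam : 0 < lam) (hx : 0 < x) :
    Real.exp (-lam) * (lam ^ (x + 1) / (x + 1)) ≤ (∫ t in Set.Ioc 0 lam, t ^ x * Real.exp (-t)) ∧
    (∫ t in Set.Ioc 0 lam, t ^ x * Real.exp (-t)) ≤ lam ^ (x + 1) / (x + 1) := by
  have hrint : IntegrableOn (fun t : ℝ => t ^ x) (Set.Ioc 0 lam) := by
    have := (intervalIntegral.intervalIntegrable_rpow (μ := MeasureTheory.volume) (r := x) (a := 0) (b := lam) (Or.inl hx.le))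
    rwa [intervalIntegrable_iff_integrableOn_Ioc_of_le hlam.le] at this
  have hgint : IntegrableOn (fun t : ℝ => t ^ x * Real.exp (-t)) (Set.Ioc 0 lam) := by
    have := (integrandInt (a := x + 1) (by linarith)).mono_set
      (Set.Ioc_subset_Ioi_self : Set.Ioc (0:ℝ) lam ⊆ Set.Ioi 0)
    simpa only [add_sub_cancel_right] using this
  have hval : (∫ t in Set.Ioc 0 lam, t ^ x) = lam ^ (x + 1) / (x + 1) := by
    rw [← intervalIntegral.integral_of_le hlam.le, integral_rpow (Or.inl (by linarith))]
    rw [Real.zero_rpow (by positivity : x + 1 ≠ 0)]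
    ring
  constructor
  · have : (∫ t in Set.Ioc 0 lam, t ^ x * Real.exp (-lam))
        ≤ ∫ t in Set.Ioc 0 lam, t ^ x * Real.exp (-t) := by
      refine setIntegral_mono_on (hrint.mul_const _) hgint measurableSet_Ioc fun t ht => ?_
      exact mul_le_mul_of_nonneg_left (Real.exp_le_exp.mpr (by linarith [ht.2]))
        (Real.rpow_nonneg ht.1.le x)
    rwa [integral_mul_const, hval, mul_comm] at this
  · have : (∫ t in Set.Ioc 0 lam, t ^ x * Real.exp (-t))
        ≤ ∫ t in Set.Ioc 0 lam, t ^ x := by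
      refine setIntegral_mono_on hgint hrint measurableSet_Ioc fun t ht => ?_
      nth_rewrite 2 [← mul_one (t ^ x)]
      exact mul_le_mul_of_nonneg_left
        (by simpa using Real.exp_le_exp.mpr (by linarith [ht.1] : -t ≤ 0))
        (Real.rpow_nonneg ht.1.le x)
    rwa [hval] at this

private lemma gamma_rec (x : ℝ) (hx : 0 < x) :
    Real.Gamma (x + 2) = (x + 1) * Real.Gamma (x + 1) := by
  have h : x + 2 = (x + 1) + 1 := by ring
  rw [h, Real.Gamma_add_one (by positivity)]

private lemma gFun_bounds (lam x : ℝ) (hlam : 0 < lam) (hx : 0 < x) :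
    Real.exp (-lam) * lam ^ (x + 1) / Real.Gamma (x + 2) ≤ gFun lam x ∧
      gFun lam x ≤ lam ^ (x + 1) / Real.Gamma (x + 2) := by
  have hΓ1 : 0 < Real.Gamma (x + 1) := Real.Gamma_pos_of_pos (by linarith)
  have hrec := gamma_rec x hx
  have hI := I_bounds lam x hlam hx
  rw [gFun_eq lam x hlam hx]
  have hx1 : (0:ℝ) < x + 1 := by linarith
  constructor
  · have e1 : Real.exp (-lam) * lam ^ (x + 1) / Real.Gamma (x + 2)
        = (Real.exp (-lam) * (lam ^ (x + 1) / (x + 1))) / Real.Gamma (x + 1) := by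
      rw [hrec]; field_simp
    rw [e1]
    exact div_le_div_of_nonneg_right hI.1 hΓ1.le
  · have e2 : lam ^ (x + 1) / Real.Gamma (x + 2)
        = (lam ^ (x + 1) / (x + 1)) / Real.Gamma (x + 1) := by
      rw [hrec]; field_simp
    rw [e2]
    exact div_le_div_of_nonneg_right hI.2 hΓ1.le

open MeasureTheory Set in
private lemma gamma_lower (x : ℝ) (hx : 1 ≤ x) :
    x ^ (x + 2) * Real.exp (-(2 * x)) ≤ Real.Gamma (x + 2) := by
  have h0 : (0:ℝ) < x := by linarith
  rw [gamma_eq (by linarith : (0:ℝ) < x + 2)]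
  have hsub : Set.Ioc x (2 * x) ⊆ Set.Ioi (0:ℝ) := fun t ht => lt_trans h0 ht.1
  have hint : IntegrableOn (fun t : ℝ => t ^ (x + 2 - 1) * Real.exp (-t)) (Set.Ioc x (2 * x)) :=
    (integrandInt (by linarith : (0:ℝ) < x + 2)).mono_set hsub
  have step1 : x ^ (x + 2) * Real.exp (-(2 * x))
      ≤ ∫ t in Set.Ioc x (2 * x), t ^ (x + 2 - 1) * Real.exp (-t) := by
    have hconst : (∫ _t in Set.Ioc x (2 * x), (x ^ (x + 1) * Real.exp (-(2 * x)) : ℝ))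
        = x ^ (x + 2) * Real.exp (-(2 * x)) := by
      rw [setIntegral_const, Real.volume_real_Ioc_of_le (by linarith), smul_eq_mul]
      have : x ^ (x + 2) = x ^ (x + 1) * x := by
        rw [show x + 2 = (x + 1) + 1 by ring, Real.rpow_add_one h0.ne']
      rw [this]; ring
    rw [← hconst]
    refine setIntegral_mono_on (integrableOn_const measure_Ioc_lt_top.ne)
      hint measurableSet_Ioc fun t ht => ?_
    have h1 : x ^ (x + 1) ≤ t ^ (x + 2 - 1) := by
      rw [show x + 2 - 1 = x + 1 by ring]
      exact Real.rpow_le_rpow h0.le ht.1.le (by linarith)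
    have h2 : Real.exp (-(2 * x)) ≤ Real.exp (-t) := Real.exp_le_exp.mpr (by linarith [ht.2])
    exact mul_le_mul h1 h2 (Real.exp_pos _).le (Real.rpow_nonneg (by linarith [ht.1]) _)
  refine step1.trans ?_
  refine setIntegral_mono_set (integrandInt (by linarith : (0:ℝ) < x + 2)) ?_ hsub.eventuallyLE
  filter_upwards [ae_restrict_mem measurableSet_Ioi] with t ht
  have ht0 : (0:ℝ) < t := ht
  positivity

open MeasureTheory Set in
private lemma exp_half_int : IntegrableOn (fun t : ℝ => Real.exp (-(2⁻¹ * t))) (Set.Ioi (0:ℝ)) := by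
  have base : IntegrableOn (fun t : ℝ => Real.exp (-t)) (Set.Ioi (0:ℝ)) := by
    have := Real.GammaIntegral_convergent one_pos
    refine this.congr_fun (fun t ht => ?_) measurableSet_Ioi
    simp [Real.rpow_zero]
  have := (integrableOn_Ioi_comp_mul_left_iff (fun t : ℝ => Real.exp (-t)) 0
    (by norm_num : (0:ℝ) < 2⁻¹)).mpr (by simpa using base)
  simpa using this

open MeasureTheory Set in
private lemma exp_half_val : (∫ t in Set.Ioi (0:ℝ), Real.exp (-(2⁻¹ * t))) = 2 := by
  have := integral_comp_mul_left_Ioi (fun t : ℝ => Real.exp (-t)) 0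
    (by norm_num : (0:ℝ) < 2⁻¹)
  rw [mul_zero, integral_exp_neg_Ioi_zero] at this
  simpa using this

open MeasureTheory Set in
private lemma gamma_upper (x : ℝ) (hx : 1 ≤ x) :
    Real.Gamma (x + 2) ≤ 2 * (2 * (x + 1)) ^ (x + 1) * Real.exp (-(x + 1)) := by
  have h0 : (0:ℝ) < x := by linarith
  have hx1 : (0:ℝ) < x + 1 := by linarith
  have hc : (0:ℝ) < 2 * (x + 1) := by linarith
  rw [gamma_eq (by linarith : (0:ℝ) < x + 2)]
  have hpt : ∀ t ∈ Set.Ioi (0:ℝ), t ^ (x + 2 - 1) * Real.exp (-t)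
      ≤ ((2 * (x + 1)) ^ (x + 1) * Real.exp (-(x + 1))) * Real.exp (-(2⁻¹ * t)) := by
    intro t ht
    have ht0 : (0:ℝ) < t := ht
    have hlog : Real.log (t / (2 * (x + 1))) ≤ t / (2 * (x + 1)) - 1 :=
      Real.log_le_sub_one_of_pos (by positivity)
    have hlog2 : Real.log t - Real.log (2 * (x + 1)) ≤ t / (2 * (x + 1)) - 1 := by
      rwa [Real.log_div ht0.ne' hc.ne'] at hlog
    have key : (x + 1) * Real.log t - t ≤ (x + 1) * Real.log (2 * (x + 1)) - (x + 1) - 2⁻¹ * t := by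
      have := mul_le_mul_of_nonneg_left hlog2 hx1.le
      have he : (x + 1) * (t / (2 * (x + 1)) - 1) = 2⁻¹ * t - (x + 1) := by
        field_simp
      rw [he] at this
      linarith
    rw [show x + 2 - 1 = x + 1 by ring, Real.rpow_def_of_pos ht0, Real.rpow_def_of_pos hc,
      ← Real.exp_add, ← Real.exp_add, ← Real.exp_add]
    exact Real.exp_le_exp.mpr (by linarith)
  calc (∫ t in Set.Ioi (0:ℝ), t ^ (x + 2 - 1) * Real.exp (-t))
      ≤ ∫ t in Set.Ioi (0:ℝ),
          ((2 * (x + 1)) ^ (x + 1) * Real.exp (-(x + 1))) * Real.exp (-(2⁻¹ * t)) := by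
        exact setIntegral_mono_on (integrandInt (by linarith : (0:ℝ) < x + 2))
          (exp_half_int.const_mul _) measurableSet_Ioi hpt
    _ = ((2 * (x + 1)) ^ (x + 1) * Real.exp (-(x + 1))) * 2 := by
        rw [integral_const_mul, exp_half_val]
    _ = 2 * (2 * (x + 1)) ^ (x + 1) * Real.exp (-(x + 1)) := by ring

private lemma logGamma_bounds (x : ℝ) (hx : 2 ≤ x) :
    x * Real.log x - 2 * x ≤ Real.log (Real.Gamma (x + 2)) ∧
      Real.log (Real.Gamma (x + 2)) ≤ x * Real.log x + 6 * x := by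
  have h0 : (0:ℝ) < x := by linarith
  have hΓ : 0 < Real.Gamma (x + 2) := Real.Gamma_pos_of_pos (by linarith)
  have hlx : 0 ≤ Real.log x := Real.log_nonneg (by linarith)
  have hlxx : Real.log x ≤ x - 1 := Real.log_le_sub_one_of_pos h0
  constructor
  · have hlow := gamma_lower x (by linarith)
    have h1 : Real.log (x ^ (x + 2) * Real.exp (-(2 * x))) ≤ Real.log (Real.Gamma (x + 2)) :=
      Real.log_le_log (by positivity) hlow
    rw [Real.log_mul (by positivity) (Real.exp_pos _).ne', Real.log_rpow h0,
      Real.log_exp] at h1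
    nlinarith
  · have hupp := gamma_upper x (by linarith)
    have h2 : Real.log (Real.Gamma (x + 2))
        ≤ Real.log (2 * (2 * (x + 1)) ^ (x + 1) * Real.exp (-(x + 1))) :=
      Real.log_le_log hΓ hupp
    have hc : (0:ℝ) < 2 * (x + 1) := by linarith
    rw [Real.log_mul (by positivity) (Real.exp_pos _).ne',
      Real.log_mul (by norm_num) (by positivity), Real.log_rpow hc, Real.log_exp] at h2
    have hl2 : Real.log 2 ≤ 1 := by linarith [Real.log_le_sub_one_of_pos (by norm_num : (0:ℝ) < 2)]
    have hlx1 : Real.log (2 * (x + 1)) ≤ Real.log 2 + Real.log 2 + Real.log x := by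
      rw [Real.log_mul (by norm_num) (by positivity)]
      have : Real.log (x + 1) ≤ Real.log (2 * x) :=
        Real.log_le_log (by linarith) (by linarith)
      rw [Real.log_mul (by norm_num) h0.ne'] at this
      linarith
    nlinarith [mul_le_mul_of_nonneg_left hlx1 (by linarith : (0:ℝ) ≤ x + 1)]

private lemma L_bounds (lam x : ℝ) (hlam : 0 < lam) (hx : 2 ≤ x) :
    0 < gFun lam x ∧
      x * (Real.log x - (6 + 2 * |Real.log lam| + lam)) ≤ Real.log (1 / gFun lam x) ∧
      Real.log (1 / gFun lam x) ≤ x * (Real.log x + (6 + 2 * |Real.log lam| + lam)) := by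
  have h0 : (0:ℝ) < x := by linarith
  have hΓ : 0 < Real.Gamma (x + 2) := Real.Gamma_pos_of_pos (by linarith)
  obtain ⟨hA, hB⟩ := gFun_bounds lam x hlam h0
  have hApos : 0 < Real.exp (-lam) * lam ^ (x + 1) / Real.Gamma (x + 2) := by positivity
  have hε : 0 < gFun lam x := lt_of_lt_of_le hApos hA
  refine ⟨hε, ?_, ?_⟩
  all_goals
    have hlogA : Real.log (Real.exp (-lam) * lam ^ (x + 1) / Real.Gamma (x + 2))
        = -lam + (x + 1) * Real.log lam - Real.log (Real.Gamma (x + 2)) := by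
      rw [Real.log_div (by positivity) hΓ.ne', Real.log_mul (Real.exp_pos _).ne'
        (by positivity), Real.log_exp, Real.log_rpow hlam]
    have hlogB : Real.log (lam ^ (x + 1) / Real.Gamma (x + 2))
        = (x + 1) * Real.log lam - Real.log (Real.Gamma (x + 2)) := by
      rw [Real.log_div (by positivity) hΓ.ne', Real.log_rpow hlam]
    have h1 : Real.log (gFun lam x) ≤ (x + 1) * Real.log lam - Real.log (Real.Gamma (x + 2)) :=
      hlogB ▸ Real.log_le_log hε hB
    have h2 : -lam + (x + 1) * Real.log lam - Real.log (Real.Gamma (x + 2))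
        ≤ Real.log (gFun lam x) := hlogA ▸ Real.log_le_log hApos hA
    have hG := logGamma_bounds x hx
    have hLdef : Real.log (1 / gFun lam x) = -Real.log (gFun lam x) := by
      rw [one_div, Real.log_inv]
    have e1 : (x + 1) * Real.log lam ≤ (x + 1) * |Real.log lam| :=
      mul_le_mul_of_nonneg_left (le_abs_self _) (by linarith)
    have e1' : -((x + 1) * |Real.log lam|) ≤ (x + 1) * Real.log lam := by
      have := mul_le_mul_of_nonneg_left (neg_abs_le (Real.log lam)) (by linarith : (0:ℝ) ≤ x + 1)
      linarith [this]
    have e2 : (x + 1) * |Real.log lam| ≤ 2 * x * |Real.log lam| :=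
      mul_le_mul_of_nonneg_right (by linarith) (abs_nonneg _)
    have e3 : lam ≤ lam * x := by nlinarith
    rw [hLdef]
  · nlinarith
  · nlinarith

private lemma W_le (W : ℝ → ℝ) (hW : ∀ y : ℝ, 0 ≤ y → 0 ≤ W y ∧ W y * Real.exp (W y) = y)
    {y v : ℝ} (hy : 0 ≤ y) (hv : 0 ≤ v) (h : y ≤ v * Real.exp v) : W y ≤ v := by
  obtain ⟨h0, h1⟩ := hW y hy
  by_contra hlt
  push_neg at hlt
  have : v * Real.exp v < W y * Real.exp (W y) :=
    lt_of_lt_of_le (mul_lt_mul_of_pos_right hlt (Real.exp_pos v))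
      (mul_le_mul_of_nonneg_left (Real.exp_le_exp.mpr hlt.le) h0)
  rw [h1] at this
  linarith

private lemma le_W (W : ℝ → ℝ) (hW : ∀ y : ℝ, 0 ≤ y → 0 ≤ W y ∧ W y * Real.exp (W y) = y)
    {y v : ℝ} (hy : 0 ≤ y) (hv : 0 ≤ v) (h : v * Real.exp v ≤ y) : v ≤ W y := by
  obtain ⟨h0, h1⟩ := hW y hy
  by_contra hlt
  push_neg at hlt
  have : W y * Real.exp (W y) < v * Real.exp v :=
    lt_of_lt_of_le (mul_lt_mul_of_pos_right hlt (Real.exp_pos _))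
      (mul_le_mul_of_nonneg_left (Real.exp_le_exp.mpr hlt.le) hv)
  rw [h1] at this
  linarith

open MeasureTheory Set in
private lemma xe_top (lam : ℝ) (hlam : 0 < lam) (xe : ℝ → ℝ)
    (hxe : ∀ᶠ ε in nhdsWithin 0 (Set.Ioi 0), 0 < xe ε ∧ gFun lam (xe ε) = ε) :
    Tendsto xe (nhdsWithin 0 (Set.Ioi 0)) atTop := by
  rw [tendsto_atTop]
  intro M
  set M' := max M 1 with hM'
  set f : ℝ → ℝ := fun x => Real.exp (-lam) * lam ^ (x + 1) / Real.Gamma (x + 2) with hf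
  have hcont : ContinuousOn f (Set.Icc 0 M') := by
    intro x hx
    have hx2 : (0:ℝ) < x + 2 := by linarith [hx.1]
    refine ContinuousAt.continuousWithinAt ?_
    refine ContinuousAt.div ?_ ?_ (Real.Gamma_pos_of_pos hx2).ne'
    · exact continuousAt_const.mul ((Real.continuousAt_const_rpow hlam.ne').comp
        (continuousAt_id.add continuousAt_const))
    · exact ((Real.differentiableAt_Gamma (fun m => by
        have : (0:ℝ) ≤ m := Nat.cast_nonneg m
        exact ne_of_gt (by linarith))).continuousAt).comp
        (continuousAt_id.add continuousAt_const)
  obtain ⟨x₀, hx₀, hmin'⟩ := isCompact_Icc.exists_isMinOn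
    (Set.nonempty_Icc.mpr (by positivity : (0:ℝ) ≤ M')) hcont
  have hmin : ∀ y ∈ Set.Icc 0 M', f x₀ ≤ f y := fun y hy => hmin' hy
  have hm : 0 < f x₀ := by
    have : (0:ℝ) < x₀ + 2 := by linarith [hx₀.1]
    have := Real.Gamma_pos_of_pos this
    rw [hf]
    positivity
  filter_upwards [hxe, Ioo_mem_nhdsGT_of_mem (show (0:ℝ) ∈ Set.Ico 0 (f x₀) from ⟨le_rfl, hm⟩)]
    with ε hε hιε
  rcases le_or_gt (xe ε) M' with h | h
  · exfalso
    have hb := (gFun_bounds lam (xe ε) hlam hε.1).1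
    have : f x₀ ≤ f (xe ε) := hmin (xe ε) ⟨hε.1.le, h⟩
    rw [hf] at this
    simp only at this
    rw [hε.2] at hb
    exact absurd (lt_of_lt_of_le hιε.2 (this.trans hb)) (lt_irrefl ε)
  · linarith [le_max_left M 1]

private lemma ratio_tendsto (a b : ℝ) :
    Tendsto (fun t : ℝ => (t + a) / (t + b)) atTop (nhds 1) := by
  have h1 : Tendsto (fun t : ℝ => 1 + (a - b) / (t + b)) atTop (nhds 1) := by
    have h0 : Tendsto (fun t : ℝ => (a - b) / (t + b)) atTop (nhds 0) :=
      Tendsto.div_atTop tendsto_const_nhds (tendsto_atTop_add_const_right _ b tendsto_id)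
    simpa using tendsto_const_nhds.add h0
  refine h1.congr' ?_
  filter_upwards [eventually_gt_atTop (|b| + 1)] with t ht
  have hb : 0 < t + b := by
    have := neg_abs_le b
    linarith
  field_simp
  ring

/-- If `x(ε)` solves `g_λ(x(ε)) = ε` on `(0, ∞)` for all small `ε > 0`, then as `ε → 0⁺`,
`x(ε) ∼ L / W(L/(eλ))` where `L = log(1/ε)` and `W` is the principal Lambert W function. -/
theorem root_asymptotic (lam : ℝ) (hlam : 0 < lam)
    (W : ℝ → ℝ) (hW : ∀ y : ℝ, 0 ≤ y → 0 ≤ W y ∧ W y * Real.exp (W y) = y)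
    (xe : ℝ → ℝ)
    (hxe : ∀ᶠ ε in nhdsWithin 0 (Set.Ioi 0), 0 < xe ε ∧ gFun lam (xe ε) = ε) :
    Tendsto
      (fun ε : ℝ =>
        xe ε / (Real.log (1 / ε) / W (Real.log (1 / ε) / (Real.exp 1 * lam))))
      (nhdsWithin 0 (Set.Ioi 0)) (nhds 1) := by
  have hxtop : Tendsto xe (nhdsWithin 0 (Set.Ioi 0)) atTop := xe_top lam hlam xe hxe
  obtain ⟨C, hCdef⟩ : ∃ c : ℝ, c = 6 + 2 * |Real.log lam| + lam := ⟨_, rfl⟩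
  obtain ⟨D, hDdef⟩ : ∃ d : ℝ, d = C + 2 + |Real.log lam| := ⟨_, rfl⟩
  have habs : 0 ≤ |Real.log lam| := abs_nonneg _
  have hC0 : 0 < C := by rw [hCdef]; linarith
  have hD0 : 0 < D := by rw [hDdef]; linarith
  have hCD : C ≤ D := by rw [hDdef]; linarith
  have hDlog : |Real.log lam| ≤ D := by rw [hDdef]; linarith
  have hltop : Tendsto (fun ε => Real.log (xe ε)) (nhdsWithin 0 (Set.Ioi 0)) atTop :=
    Real.tendsto_log_atTop.comp hxtop
  have hlow : Tendsto (fun ε => (Real.log (xe ε) + (-D)) / (Real.log (xe ε) + C))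
      (nhdsWithin 0 (Set.Ioi 0)) (nhds 1) := (ratio_tendsto (-D) C).comp hltop
  have hupp : Tendsto (fun ε => (Real.log (xe ε) + D) / (Real.log (xe ε) + (-C)))
      (nhdsWithin 0 (Set.Ioi 0)) (nhds 1) := (ratio_tendsto D (-C)).comp hltop
  refine tendsto_of_tendsto_of_tendsto_of_le_of_le' hlow hupp ?_ ?_
  all_goals
    filter_upwards [hxe, hxtop.eventually (eventually_ge_atTop (Real.exp (2 * D + C + 2)))]
      with ε hε hεX
    obtain ⟨hx0, hgε⟩ := hε
    set x : ℝ := xe ε with hxdef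
    have hexp2 : (2:ℝ) ≤ Real.exp (2 * D + C + 2) := by
      have := Real.add_one_le_exp (2 * D + C + 2)
      linarith
    have hx2 : (2:ℝ) ≤ x := le_trans hexp2 hεX
    have hlogx : 2 * D + C + 2 ≤ Real.log x := by
      have := Real.log_le_log (Real.exp_pos _) hεX
      rwa [Real.log_exp] at this
    have hxpos : (0:ℝ) < x := by linarith
    obtain ⟨hεpos, hL1, hL2⟩ := L_bounds lam x hlam hx2
    rw [hgε] at hεpos hL1 hL2
    rw [← hCdef] at hL1 hL2
    set L : ℝ := Real.log (1 / ε) with hLdef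
    have hLpos : 0 < L := lt_of_lt_of_le (mul_pos hxpos (by linarith)) hL1
    set y : ℝ := L / (Real.exp 1 * lam) with hydef
    have hy0 : 0 ≤ y := le_of_lt (div_pos hLpos (by positivity))
    have hexplam : (1:ℝ) ≤ Real.exp |Real.log lam| * lam := by
      have h1 : Real.exp (-Real.log lam) ≤ Real.exp |Real.log lam| :=
        Real.exp_le_exp.mpr (neg_le_abs _)
      rw [Real.exp_neg, Real.exp_log hlam] at h1
      calc (1:ℝ) = lam⁻¹ * lam := by field_simp
        _ ≤ Real.exp |Real.log lam| * lam := mul_le_mul_of_nonneg_right h1 hlam.le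
    have hlamle : lam ≤ Real.exp |Real.log lam| := by
      have h1 : Real.exp (Real.log lam) ≤ Real.exp |Real.log lam| :=
        Real.exp_le_exp.mpr (le_abs_self _)
      rwa [Real.exp_log hlam] at h1
    have hexpD : Real.exp D = Real.exp (C + 2) * Real.exp |Real.log lam| := by
      rw [hDdef, Real.exp_add]
    have hexpC2 : Real.exp 1 ≤ Real.exp (C + 2) := Real.exp_le_exp.mpr (by linarith)
    have hexp1 : (1:ℝ) ≤ Real.exp 1 := by
      rw [show (1:ℝ) = Real.exp 0 from (Real.exp_zero).symm]
      exact Real.exp_le_exp.mpr (by norm_num)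
    -- upper bound for W y
    have hWu : W y ≤ Real.log x + D := by
      refine W_le W hW hy0 (by linarith) ?_
      have he : Real.exp (Real.log x + D) = x * Real.exp D := by
        rw [Real.exp_add, Real.exp_log hxpos]
      have h1 : (1:ℝ) / (Real.exp 1 * lam) ≤ Real.exp D := by
        rw [div_le_iff₀ (by positivity)]
        have p2 : (1:ℝ) ≤ Real.exp (C + 2) * Real.exp 1 := by
          calc (1:ℝ) = 1 * 1 := by ring
            _ ≤ Real.exp (C + 2) * Real.exp 1 :=
              mul_le_mul (le_trans hexp1 hexpC2) hexp1 zero_le_one (Real.exp_pos _).le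
        calc (1:ℝ) = 1 * 1 := by ring
          _ ≤ (Real.exp (C + 2) * Real.exp 1) * (Real.exp |Real.log lam| * lam) :=
            mul_le_mul p2 hexplam zero_le_one (by positivity)
          _ = Real.exp (C + 2) * Real.exp |Real.log lam| * (Real.exp 1 * lam) := by ring
          _ = Real.exp D * (Real.exp 1 * lam) := by rw [hexpD]
      calc y = L * (1 / (Real.exp 1 * lam)) := by rw [hydef, div_eq_mul_one_div]
        _ ≤ (x * (Real.log x + C)) * Real.exp D := by
            refine mul_le_mul hL2 h1 (by positivity) (mul_nonneg hxpos.le (by linarith))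
        _ ≤ (x * (Real.log x + D)) * Real.exp D := by
            refine mul_le_mul_of_nonneg_right
              (mul_le_mul_of_nonneg_left (by linarith) hxpos.le) (Real.exp_pos _).le
        _ = (Real.log x + D) * Real.exp (Real.log x + D) := by rw [he]; ring
    -- lower bound for W y
    have hWl : Real.log x - D ≤ W y := by
      refine le_W W hW hy0 (by linarith) ?_
      have he : Real.exp (Real.log x - D) = x * Real.exp (-D) := by
        rw [Real.exp_sub, Real.exp_log hxpos, Real.exp_neg, div_eq_mul_inv]
      have h2 : Real.exp (-D) ≤ 1 / (Real.exp 1 * lam) := by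
        rw [Real.exp_neg, one_div]
        refine inv_anti₀ (by positivity) ?_
        calc Real.exp 1 * lam ≤ Real.exp (C + 2) * Real.exp |Real.log lam| :=
            mul_le_mul hexpC2 hlamle hlam.le (Real.exp_pos _).le
          _ = Real.exp D := hexpD.symm
      calc (Real.log x - D) * Real.exp (Real.log x - D)
          = (x * (Real.log x - D)) * Real.exp (-D) := by rw [he]; ring
        _ ≤ (x * (Real.log x - C)) * (1 / (Real.exp 1 * lam)) := by
            refine mul_le_mul (mul_le_mul_of_nonneg_left (by linarith) hxpos.le) h2
              (Real.exp_pos _).le (mul_nonneg hxpos.le (by linarith))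
        _ ≤ L * (1 / (Real.exp 1 * lam)) :=
            mul_le_mul_of_nonneg_right hL1 (by positivity)
        _ = y := by rw [hydef]; ring
    have hW0 : 0 < W y := lt_of_lt_of_le (by linarith : (0:ℝ) < Real.log x - D) hWl
    have key1 : (Real.log x + -D) / (Real.log x + C) ≤ x * W y / L := by
      have e : (Real.log x + -D) / (Real.log x + C)
          = (x * (Real.log x + -D)) / (x * (Real.log x + C)) :=
        (mul_div_mul_left _ _ hxpos.ne').symm
      rw [e]
      refine div_le_div₀ (mul_nonneg hxpos.le hW0.le) ?_ hLpos ?_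
      · exact mul_le_mul_of_nonneg_left (by linarith) hxpos.le
      · exact hL2
    have key2 : x * W y / L ≤ (Real.log x + D) / (Real.log x + -C) := by
      have e : (Real.log x + D) / (Real.log x + -C)
          = (x * (Real.log x + D)) / (x * (Real.log x + -C)) :=
        (mul_div_mul_left _ _ hxpos.ne').symm
      rw [e]
      have hL1' : x * (Real.log x + -C) ≤ L := by
        have h : x * (Real.log x + -C) = x * (Real.log x - C) := by ring
        rw [h]; exact hL1
      refine div_le_div₀ (mul_nonneg hxpos.le (by linarith)) ?_
        (mul_pos hxpos (by linarith)) hL1'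
      exact mul_le_mul_of_nonneg_left (by linarith) hxpos.le
    rw [div_div_eq_mul_div]
    first
    | exact key1
    | exact key2
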